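/- Let A ∈ ℝ^{d×d} be a Schur stable matrix, i.e., every complex eigenvalue of A has modulus strictly less than 1. Then there exist a symmetric positive definite matrix P ∈ ℝ^{d×d} and a constant λ with 0 < λ < 1 such that ⟨P (A x), A x⟩ ≤ λ ⟨P x, x⟩ for all x ∈ ℝ^d. -/

import Mathlib

open Matrix Finset Filter

attribute [local instance] Matrix.linftyOpNormedRing Matrix.linftyOpNormedAlgebra

private lemma quad_helper {d : ℕ} (M : Matrix (Fin d) (Fin d) ℝ) (x : Fin d → ℝ) :
    ((Mᵀ * M) *ᵥ x) ⬝ᵥ x = (M *ᵥ x) ⬝ᵥ (M *ᵥ x) := by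
  rw [← Matrix.mulVec_mulVec, dotProduct_comm, Matrix.dotProduct_mulVec,
    Matrix.vecMul_transpose]

private lemma quadsum_helper {d : ℕ} (s : Finset ℕ) (c : ℕ → ℝ)
    (f : ℕ → Matrix (Fin d) (Fin d) ℝ) (x : Fin d → ℝ) :
    ((∑ k ∈ s, c k • ((f k)ᵀ * f k)) *ᵥ x) ⬝ᵥ x
      = ∑ k ∈ s, c k * ((f k *ᵥ x) ⬝ᵥ (f k *ᵥ x)) := by
  induction s using Finset.induction_on with
  | empty => simp
  | insert _ _ ha ih =>
    rw [Finset.sum_insert ha, Finset.sum_insert ha, Matrix.add_mulVec, add_dotProduct,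
      ih, Matrix.smul_mulVec, smul_dotProduct, quad_helper, smul_eq_mul]

/-- For a Schur stable real matrix `A` (all complex eigenvalues of modulus `< 1`) there
exist a symmetric positive definite `P` and `0 < λ < 1` with
`⟨P (A x), A x⟩ ≤ λ ⟨P x, x⟩` for all `x`. -/
theorem schur_stable_lyapunov {d : ℕ} (A : Matrix (Fin d) (Fin d) ℝ)
    (hA : ∀ z ∈ spectrum ℂ (A.map (algebraMap ℝ ℂ)), ‖z‖ < 1) :
    ∃ P : Matrix (Fin d) (Fin d) ℝ, P.PosDef ∧
      ∃ lam : ℝ, 0 < lam ∧ lam < 1 ∧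
        ∀ x : Fin d → ℝ,
          P.mulVec (A.mulVec x) ⬝ᵥ A.mulVec x ≤ lam * (P.mulVec x ⬝ᵥ x) := by
  rcases Nat.eq_zero_or_pos d with hd | hd
  · subst hd
    refine ⟨1, Matrix.PosDef.one, 1/2, by norm_num, by norm_num, fun x => ?_⟩
    simp [dotProduct]
  -- main case : d ≥ 1
  haveI : Nonempty (Fin d) := ⟨⟨0, hd⟩⟩
  haveI : CompleteSpace (Matrix (Fin d) (Fin d) ℂ) := FiniteDimensional.complete ℂ _
  set B := A.map (algebraMap ℝ ℂ) with hB
  -- spectral radius < 1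
  have hρ : spectralRadius ℂ B < 1 := by
    have := spectrum.spectralRadius_lt_of_forall_lt_of_nonempty (spectrum.nonempty B)
      (r := 1) (fun k hk => ?_)
    · simpa using this
    · have h1 : ‖k‖ < 1 := by exact hA k hk
      exact_mod_cast h1
  obtain ⟨r, hρr, hr1⟩ := ENNReal.lt_iff_exists_nnreal_btwn.mp hρ
  have hr1' : (r : ℝ) < 1 := by exact_mod_cast hr1
  -- Gelfand's formula : eventually ‖B^n‖ < r^n
  have T := spectrum.pow_nnnorm_pow_one_div_tendsto_nhds_spectralRadius B
  have hev : ∀ᶠ n : ℕ in atTop, (‖B ^ n‖₊ : ENNReal) ^ (1 / (n : ℝ)) < (r : ENNReal) :=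
    T.eventually_lt_const hρr
  obtain ⟨n₀, hn₀⟩ := eventually_atTop.mp hev
  -- constants
  set s : ℝ := max (r : ℝ) (1/2) with hs_def
  have hs0 : (0:ℝ) < s := lt_max_of_lt_right (by norm_num)
  have hs1 : s < 1 := max_lt hr1' (by norm_num)
  set μ : ℝ := (s + 1) / 2 with hμ_def
  have hsμ : s < μ := by rw [hμ_def]; linarith
  have hμ1 : μ < 1 := by rw [hμ_def]; linarith
  have hμ0 : (0:ℝ) < μ := lt_trans hs0 hsμ
  have hquot : (1:ℝ) < μ / s := (one_lt_div hs0).mpr hsμ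
  obtain ⟨N₁, hN₁⟩ := pow_unbounded_of_one_lt (d : ℝ) hquot
  set N : ℕ := max (max n₀ 1) N₁ with hN_def
  have hNn₀ : n₀ ≤ N := le_trans (le_max_left _ _) (le_max_left _ _)
  have hN1 : 1 ≤ N := le_trans (le_max_right _ _) (le_max_left _ _)
  have hNN₁ : N₁ ≤ N := le_max_right _ _
  have hN0 : (N : ℝ) ≠ 0 := by positivity
  have hdN : (d : ℝ) ≤ (μ / s) ^ N :=
    le_trans hN₁.le (pow_le_pow_right₀ hquot.le hNN₁)
  have hdsN : (d : ℝ) * s ^ N ≤ μ ^ N := by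
    have hsN : (0:ℝ) < s ^ N := pow_pos hs0 N
    rw [div_pow] at hdN
    calc (d : ℝ) * s ^ N ≤ (μ ^ N / s ^ N) * s ^ N := by
          exact mul_le_mul_of_nonneg_right hdN hsN.le
      _ = μ ^ N := by field_simp
  -- norm bound on B ^ N
  have hBN : ‖B ^ N‖ < (r : ℝ) ^ N := by
    have h := hn₀ N hNn₀
    have hNpos : (0:ℝ) < N := by positivity
    have h2 := ENNReal.rpow_lt_rpow h hNpos
    rw [← ENNReal.rpow_mul, one_div, inv_mul_cancel₀ hN0, ENNReal.rpow_one,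
      ENNReal.rpow_natCast, ← ENNReal.coe_pow, ENNReal.coe_lt_coe] at h2
    exact_mod_cast h2
  -- entrywise bound on A ^ N
  have hmap : B ^ N = (A ^ N).map (algebraMap ℝ ℂ) := by
    rw [hB, ← RingHom.mapMatrix_apply, ← map_pow, RingHom.mapMatrix_apply]
  have hentry : ∀ i j, |(A ^ N) i j| ≤ s ^ N := by
    intro i j
    have h1 : ‖(B ^ N) i j‖₊ ≤ ‖B ^ N‖₊ := by
      rw [Matrix.linfty_opNNNorm_def]
      exact le_trans
        (Finset.single_le_sum (f := fun k => ‖(B ^ N) i k‖₊) (fun k _ => by positivity)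
          (Finset.mem_univ j))
        (Finset.le_sup (f := fun i => ∑ j, ‖(B ^ N) i j‖₊) (Finset.mem_univ i))
    have h1' : ‖(B ^ N) i j‖ ≤ ‖B ^ N‖ := h1
    have h2 : ‖(B ^ N) i j‖ = |(A ^ N) i j| := by
      rw [hmap]
      simp [Matrix.map_apply, Complex.norm_real, Real.norm_eq_abs]
    have h3 : (r:ℝ) ^ N ≤ s ^ N := by
      apply pow_le_pow_left₀ (by positivity)
      exact le_max_left _ _
    linarith [h1', hBN]
  -- Euclidean bound : ‖A^N x‖² ≤ (μ^N)² ‖x‖²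
  have hEuc : ∀ x : Fin d → ℝ,
      ((A ^ N) *ᵥ x) ⬝ᵥ ((A ^ N) *ᵥ x) ≤ (μ ^ N) ^ 2 * (x ⬝ᵥ x) := by
    intro x
    have hxx : (0:ℝ) ≤ x ⬝ᵥ x := by
      simpa using dotProduct_star_self_nonneg x
    have hrow : ∀ i : Fin d, (((A ^ N) *ᵥ x) i) ^ 2 ≤ (d : ℝ) * (s ^ N) ^ 2 * (x ⬝ᵥ x) := by
      intro i
      have hCS := Finset.sum_mul_sq_le_sq_mul_sq Finset.univ (fun j => (A ^ N) i j) x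
      have hsum : ∑ j, ((A ^ N) i j) ^ 2 ≤ (d : ℝ) * (s ^ N) ^ 2 := by
        calc ∑ j, ((A ^ N) i j) ^ 2 ≤ ∑ _j : Fin d, (s ^ N) ^ 2 := by
              apply Finset.sum_le_sum
              intro j _
              rw [← sq_abs]
              exact pow_le_pow_left₀ (abs_nonneg _) (hentry i j) 2
          _ = (d : ℝ) * (s ^ N) ^ 2 := by simp [mul_comm]
      calc (((A ^ N) *ᵥ x) i) ^ 2 = (∑ j, (A ^ N) i j * x j) ^ 2 := by
            rfl
        _ ≤ (∑ j, ((A ^ N) i j) ^ 2) * ∑ j, (x j) ^ 2 := hCS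
        _ ≤ ((d : ℝ) * (s ^ N) ^ 2) * (x ⬝ᵥ x) := by
            apply mul_le_mul hsum ?_ (by positivity) (by positivity)
            apply le_of_eq
            simp [dotProduct, sq]
    calc ((A ^ N) *ᵥ x) ⬝ᵥ ((A ^ N) *ᵥ x) = ∑ i, (((A ^ N) *ᵥ x) i) ^ 2 := by
          simp [dotProduct, sq]
      _ ≤ ∑ _i : Fin d, (d : ℝ) * (s ^ N) ^ 2 * (x ⬝ᵥ x) := Finset.sum_le_sum fun i _ => hrow i
      _ = ((d : ℝ) * s ^ N) ^ 2 * (x ⬝ᵥ x) := by ring_nf; simp [Finset.sum_const]; ring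
      _ ≤ (μ ^ N) ^ 2 * (x ⬝ᵥ x) := by
          apply mul_le_mul_of_nonneg_right _ hxx
          apply pow_le_pow_left₀ (by positivity) hdsN
  -- construct P
  set t : ℝ := μ ^ 2 with ht_def
  have ht0 : (0:ℝ) < t := by positivity
  have ht1 : t < 1 := by
    rw [ht_def]
    exact pow_lt_one₀ hμ0.le hμ1 (by norm_num)
  set P : Matrix (Fin d) (Fin d) ℝ :=
    ∑ k ∈ Finset.range N, (t⁻¹) ^ k • ((A ^ k)ᵀ * A ^ k) with hP_def
  have hq : ∀ x : Fin d → ℝ,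
      (P *ᵥ x) ⬝ᵥ x = ∑ k ∈ Finset.range N, (t⁻¹) ^ k * ((A ^ k *ᵥ x) ⬝ᵥ (A ^ k *ᵥ x)) := by
    intro x
    rw [hP_def]
    exact quadsum_helper _ _ _ x
  have hterm_nonneg : ∀ (x : Fin d → ℝ) (k : ℕ),
      (0:ℝ) ≤ (t⁻¹) ^ k * ((A ^ k *ᵥ x) ⬝ᵥ (A ^ k *ᵥ x)) := by
    intro x k
    have := dotProduct_star_self_nonneg (A ^ k *ᵥ x)
    simp only [star_trivial] at this
    positivity
  have hq_ge : ∀ x : Fin d → ℝ, x ⬝ᵥ x ≤ (P *ᵥ x) ⬝ᵥ x := by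
    intro x
    rw [hq]
    have h0 : (0:ℕ) ∈ Finset.range N := Finset.mem_range.mpr hN1
    calc x ⬝ᵥ x = (t⁻¹) ^ 0 * ((A ^ 0 *ᵥ x) ⬝ᵥ (A ^ 0 *ᵥ x)) := by simp
      _ ≤ _ := Finset.single_le_sum (fun k _ => hterm_nonneg x k) h0
  -- P is positive definite
  have hPD : P.PosDef := by
    rw [Matrix.posDef_iff_dotProduct_mulVec]
    constructor
    · -- Hermitian
      rw [Matrix.IsHermitian, Matrix.conjTranspose_eq_transpose_of_trivial, hP_def]
      rw [Matrix.transpose_sum]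
      refine Finset.sum_congr rfl fun k _ => ?_
      rw [Matrix.transpose_smul, Matrix.transpose_mul, Matrix.transpose_transpose]
    · intro x hx
      have hxx : (0:ℝ) < x ⬝ᵥ x := by
        have := (Matrix.dotProduct_star_self_pos_iff (v := x)).mpr hx
        simpa using this
      have := hq_ge x
      rw [star_trivial, dotProduct_comm]
      linarith
  -- the decay inequality
  refine ⟨P, hPD, t, ht0, ht1, fun x => ?_⟩
  set g : ℕ → ℝ := fun k => (A ^ k *ᵥ x) ⬝ᵥ (A ^ k *ᵥ x) with hg_def
  have hg_nonneg : ∀ k, 0 ≤ g k := by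
    intro k
    have := dotProduct_star_self_nonneg (A ^ k *ᵥ x)
    simpa using this
  have hshift : ∀ k : ℕ, A ^ k *ᵥ (A *ᵥ x) = A ^ (k+1) *ᵥ x := by
    intro k
    rw [Matrix.mulVec_mulVec, ← pow_succ]
  have hqA : (P *ᵥ (A *ᵥ x)) ⬝ᵥ (A *ᵥ x)
      = ∑ k ∈ Finset.range N, (t⁻¹) ^ k * g (k+1) := by
    rw [hq]
    refine Finset.sum_congr rfl fun k _ => ?_
    rw [hshift k]
  have hsum1 : ∑ k ∈ Finset.range N, (t⁻¹) ^ k * g (k+1)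
      = t * ∑ k ∈ Finset.range N, (t⁻¹) ^ (k+1) * g (k+1) := by
    rw [Finset.mul_sum]
    refine Finset.sum_congr rfl fun k _ => ?_
    rw [pow_succ]
    field_simp
  have hsum2 : ∑ k ∈ Finset.range N, (t⁻¹) ^ (k+1) * g (k+1)
      = (∑ k ∈ Finset.range N, (t⁻¹) ^ k * g k) + (t⁻¹) ^ N * g N - g 0 := by
    have h1 := Finset.sum_range_succ' (fun k => (t⁻¹) ^ k * g k) N
    have h2 := Finset.sum_range_succ (fun k => (t⁻¹) ^ k * g k) N
    simp only [pow_zero, one_mul] at h1 h2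
    linarith
  have hkey : (t⁻¹) ^ N * g N ≤ g 0 := by
    have hgN : g N ≤ t ^ N * g 0 := by
      have := hEuc x
      rw [hg_def]
      simp only []
      have h0 : g 0 = x ⬝ᵥ x := by rw [hg_def]; simp
      rw [ht_def, ← pow_right_comm]
      calc (A ^ N *ᵥ x) ⬝ᵥ (A ^ N *ᵥ x) ≤ (μ ^ N) ^ 2 * (x ⬝ᵥ x) := hEuc x
        _ = (μ ^ N) ^ 2 * g 0 := by rw [h0]
      
    calc (t⁻¹) ^ N * g N ≤ (t⁻¹) ^ N * (t ^ N * g 0) := by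
          apply mul_le_mul_of_nonneg_left hgN (by positivity)
      _ = g 0 := by
          rw [← mul_assoc, ← mul_pow, inv_mul_cancel₀ ht0.ne', one_pow, one_mul]
  rw [hqA, hsum1, hsum2, hq]
  have : (∑ k ∈ Finset.range N, (t⁻¹) ^ k * g k) + (t⁻¹) ^ N * g N - g 0
      ≤ ∑ k ∈ Finset.range N, (t⁻¹) ^ k * g k := by linarith
  calc t * ((∑ k ∈ Finset.range N, (t⁻¹) ^ k * g k) + (t⁻¹) ^ N * g N - g 0)
      ≤ t * ∑ k ∈ Finset.range N, (t⁻¹) ^ k * g k :=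
        mul_le_mul_of_nonneg_left this ht0.le
    _ = t * ∑ k ∈ Finset.range N, (t⁻¹) ^ k * ((A ^ k *ᵥ x) ⬝ᵥ (A ^ k *ᵥ x)) := rfl
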